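/- arXiv:1910.12482 — 4 statements merged into one kernel-verified Lean document; each statement's English description precedes it below -/
import Mathlib

section
/- Let n ∈ ℕ, let a₀ ≥ a₁ ≥ … ≥ a_{n-1} ≥ 0, and let l : {0,…,n-1} → {0,…,n-1} be any map. Define C(l) = ⌈ sup_{0 ≤ r < n} (1/(r+1)) · Card{k : l(k) ≤ r} ⌉. Then the distribution function of the tuple (a_{l(0)}, …, a_{l(n-1)}) satisfies d_{(a_{l(k)})}(t) ≤ C(l) · d_{(a_k)}(t) for all t ≥ 0; equivalently, the decreasing rearrangement of (a_{l(k)})_{k=0}^{n-1} is dominated by the C(l)-fold dilation of (a_k)_{k=0}^{n-1}. -/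
/-- Distribution function of a finite tuple: `d_a(t) = Card {k : a k > t}`. -/
noncomputable def tupleDist {n : ℕ} (a : Fin n → ℝ) (t : ℝ) : ℕ :=
  (Finset.univ.filter fun k => t < a k).card

/-- for a nonincreasing nonnegative tuple `a` and any map
`l : {0,…,n-1} → {0,…,n-1}`, with
`C(l) = ⌈sup_{0 ≤ r < n} Card{k : l k ≤ r}/(r+1)⌉`, the distribution function of
`(a (l k))_k` satisfies `d_{a∘l}(t) ≤ C(l) · d_a(t)` for all `t ≥ 0`. -/
theorem stmt_7 (n : ℕ) (hn : 0 < n) (a : Fin n → ℝ)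
    (ha : ∀ k, 0 ≤ a k) (hmono : ∀ i j : Fin n, i ≤ j → a j ≤ a i)
    (l : Fin n → Fin n) :
    ∀ t : ℝ, 0 ≤ t →
      (tupleDist (a ∘ l) t : ℝ) ≤
        ⌈(Finset.univ.sup' (by simpa [Finset.univ_nonempty_iff] using Fin.pos_iff_nonempty.mp hn)
            fun r : Fin n =>
              ((Finset.univ.filter fun k => l k ≤ r).card : ℝ) / ((r : ℕ) + 1))⌉₊ *
          (tupleDist a t : ℝ) := by
  intro t ht
  classical
  set m := tupleDist a t with hm
  have hmn : m ≤ n := by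
    have := Finset.card_filter_le Finset.univ fun k : Fin n => t < a k
    simpa [hm, tupleDist] using this
  have key : ∀ k : Fin n, t < a k ↔ (k : ℕ) < m := by
    intro k
    constructor
    · intro hk
      have hsub : Finset.Iic k ⊆ Finset.univ.filter fun j => t < a j := by
        intro i hi
        simp only [Finset.mem_Iic] at hi
        simp only [Finset.mem_filter, Finset.mem_univ, true_and]
        exact lt_of_lt_of_le hk (hmono i k hi)
      have h := Finset.card_le_card hsub
      rw [Fin.card_Iic] at h
      have : (k : ℕ) + 1 ≤ m := by simpa [hm, tupleDist] using h
      omega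
    · intro hk
      by_contra hnot
      have hsub : (Finset.univ.filter fun j => t < a j) ⊆ Finset.Iio k := by
        intro i hi
        simp only [Finset.mem_filter, Finset.mem_univ, true_and] at hi
        simp only [Finset.mem_Iio]
        by_contra hle
        exact hnot (lt_of_lt_of_le hi (hmono k i (le_of_not_gt hle)))
      have h := Finset.card_le_card hsub
      rw [Fin.card_Iio] at h
      have : m ≤ (k : ℕ) := by simpa [hm, tupleDist] using h
      omega
  rcases Nat.eq_zero_or_pos m with h0 | hpos
  · have hz : tupleDist (a ∘ l) t = 0 := by
      simp only [tupleDist, Finset.card_eq_zero, Finset.filter_eq_empty_iff]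
      intro k _
      intro hk
      have := (key (l k)).mp hk
      omega
    rw [hz, Nat.cast_zero]
    exact mul_nonneg (Nat.cast_nonneg _) (Nat.cast_nonneg _)
  · have hm1 : m - 1 < n := by omega
    set r : Fin n := ⟨m - 1, hm1⟩ with hr
    have hcard : tupleDist (a ∘ l) t = (Finset.univ.filter fun k => l k ≤ r).card := by
      unfold tupleDist
      congr 1
      apply Finset.filter_congr
      intro k _
      simp only [Function.comp_apply, key (l k), Fin.le_def, hr]
      omega
    set S := (Finset.univ.sup' (by simpa [Finset.univ_nonempty_iff] using Fin.pos_iff_nonempty.mp hn)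
            fun r : Fin n =>
              ((Finset.univ.filter fun k => l k ≤ r).card : ℝ) / ((r : ℕ) + 1)) with hS
    have hrm : ((r : ℕ) : ℝ) + 1 = (m : ℝ) := by
      have : (r : ℕ) = m - 1 := rfl
      rw [this]
      push_cast [Nat.sub_add_cancel hpos]
      norm_num
      exact_mod_cast Nat.sub_add_cancel hpos
    have hle1 : ((Finset.univ.filter fun k => l k ≤ r).card : ℝ) / (m : ℝ) ≤ S := by
      have := Finset.le_sup' (fun r : Fin n =>
          ((Finset.univ.filter fun k => l k ≤ r).card : ℝ) / ((r : ℕ) + 1))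
          (Finset.mem_univ r)
      rw [hrm] at this
      exact this
    have hmpos : (0 : ℝ) < (m : ℝ) := by exact_mod_cast hpos
    have hle2 : ((Finset.univ.filter fun k => l k ≤ r).card : ℝ) ≤ S * m := by
      rw [div_le_iff₀ hmpos] at hle1
      exact hle1
    have hceil : S ≤ (⌈S⌉₊ : ℝ) := Nat.le_ceil S
    calc (tupleDist (a ∘ l) t : ℝ) = ((Finset.univ.filter fun k => l k ≤ r).card : ℝ) := by
          rw [hcard]
      _ ≤ S * m := hle2
      _ ≤ (⌈S⌉₊ : ℝ) * m := by
          apply mul_le_mul_of_nonneg_right hceil (le_of_lt hmpos)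
end

section
/- Let (g_k)_{k=0}^{n-1} be nonnegative independent random variables on (0,1) with ∑_{k=0}^{n-1} m(supp g_k) ≤ 1, and let g = ⊕_{k=0}^{n-1} g_k be their disjoint sum. Then μ(g) ≤ σ₂ μ(max_{0 ≤ k < n} g_k), i.e. μ(t, g) ≤ μ(t/2, max_k g_k) for all t > 0. -/
open MeasureTheory ProbabilityTheory
open scoped ENNReal

/-- Lebesgue measure on `(0,1)`. -/
noncomputable def P : Measure ℝ := volume.restrict (Set.Ioo 0 1)

/-- Decreasing rearrangement associated to a distribution function `D`:
`s ↦ inf {λ ≥ 0 : D(λ) ≤ s}`. -/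
noncomputable def rearr (D : ℝ → ℝ≥0∞) (s : ℝ) : ℝ :=
  sInf {l : ℝ | 0 ≤ l ∧ D l ≤ ENNReal.ofReal s}

private lemma prod_one_sub_le {ι : Type*} (s : Finset ι) (q : ι → ℝ)
    (h0 : ∀ i, 0 ≤ q i) (h1 : ∀ i, q i ≤ 1) :
    ∏ i ∈ s, (1 - q i) ≤ 1 - (∑ i ∈ s, q i) + (∑ i ∈ s, q i) ^ 2 / 2 := by
  induction s using Finset.cons_induction with
  | empty => simp
  | cons a s ha ih =>
    rw [Finset.prod_cons, Finset.sum_cons]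
    have hS : 0 ≤ ∑ i ∈ s, q i := Finset.sum_nonneg fun i _ => h0 i
    have h1a : (0:ℝ) ≤ 1 - q a := by linarith [h1 a]
    have := mul_le_mul_of_nonneg_left ih h1a
    nlinarith [h0 a, h1 a]

/-- Johnson–Schechtman: for nonnegative independent random
variables `g_0,…,g_{n-1}` on `(0,1)` with `∑ m(supp g_k) ≤ 1` and disjoint sum
`g` (with distribution `λ ↦ ∑_k m{g_k > λ}`), one has
`μ(t, g) ≤ μ(t/2, max_k g_k)` for all `t > 0`. -/
theorem stmt_10 (n : ℕ) (hn : 0 < n) (g : Fin n → ℝ → ℝ)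
    (hmeas : ∀ k, Measurable (g k)) (hpos : ∀ k t, 0 ≤ g k t)
    (hindep : iIndepFun g P)
    (hsupp : ∑ k, P {t | g k t ≠ 0} ≤ 1) :
    ∀ t : ℝ, 0 < t →
      rearr (fun l => ∑ k, P {x | l < g k x}) t ≤
        rearr (fun l => P {x | l < ⨆ k, g k x}) (t / 2) := by
  haveI : Nonempty (Fin n) := ⟨⟨0, hn⟩⟩
  haveI : IsProbabilityMeasure P := by
    constructor
    simp [P, Real.volume_Ioo]
  -- measurability of level sets
  have hA : ∀ (k : Fin n) (l : ℝ), MeasurableSet {x | l < g k x} := by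
    intro k l
    exact (hmeas k) measurableSet_Ioi
  -- the level set of the sup is the union of level sets
  have hU : ∀ l : ℝ, {x | l < ⨆ k, g k x} = ⋃ k, {x | l < g k x} := by
    intro l
    ext x
    simp only [Set.mem_setOf_eq, Set.mem_iUnion]
    exact lt_ciSup_iff (Set.finite_range fun k => g k x).bddAbove
  -- key inequality : D l ≤ 2 * E l for l ≥ 0
  have key : ∀ l : ℝ, 0 ≤ l →
      (∑ k, P {x | l < g k x}) ≤ 2 * P {x | l < ⨆ k, g k x} := by
    intro l hl
    set A : Fin n → Set ℝ := fun k => {x | l < g k x} with hAdef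
    have hAm : ∀ k, MeasurableSet (A k) := fun k => hA k l
    -- independence: measure of intersection of complements
    have hcomplset : ∀ k, (A k)ᶜ = g k ⁻¹' Set.Iic l := by
      intro k
      ext x
      simp [hAdef, not_lt]
    have hip : P (⋂ k, (A k)ᶜ) = ∏ k, P ((A k)ᶜ) := by
      have := hindep.measure_inter_preimage_eq_mul (μ := P) Finset.univ
        (sets := fun _ => Set.Iic l) (fun i _ => measurableSet_Iic)
      simpa [hcomplset, Set.iInter_subtype] using this
    have htot : P (⋃ k, A k) + P (⋂ k, (A k)ᶜ) = 1 := by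
      rw [← Set.compl_iUnion]
      have := measure_add_measure_compl (μ := P) (MeasurableSet.iUnion hAm)
      simpa using this
    set q : Fin n → ℝ := fun k => (P (A k)).toReal with hqdef
    have hq0 : ∀ k, 0 ≤ q k := fun k => ENNReal.toReal_nonneg
    have hq1 : ∀ k, q k ≤ 1 := by
      intro k
      have := prob_le_one (μ := P) (s := A k)
      simpa [hqdef] using ENNReal.toReal_mono ENNReal.one_ne_top this
    have hcomplval : ∀ k, (P ((A k)ᶜ)).toReal = 1 - q k := by
      intro k
      rw [measure_compl (hAm k) (measure_ne_top P _), measure_univ,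
        ENNReal.toReal_sub_of_le prob_le_one ENNReal.one_ne_top, ENNReal.toReal_one]
    set S : ℝ := ∑ k, q k with hSdef
    have hS0 : 0 ≤ S := Finset.sum_nonneg fun k _ => hq0 k
    have hsum_ne_top : (∑ k, P (A k)) ≠ ⊤ := by
      exact (ENNReal.sum_lt_top.mpr fun k _ => measure_lt_top P _).ne
    have hStoReal : S = (∑ k, P (A k)).toReal := by
      rw [hSdef, ENNReal.toReal_sum fun k _ => measure_ne_top P _]
    have hS1 : S ≤ 1 := by
      rw [hStoReal]
      have hmono : (∑ k, P (A k)) ≤ ∑ k, P {t | g k t ≠ 0} := by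
        refine Finset.sum_le_sum fun k _ => measure_mono ?_
        intro x hx
        exact ne_of_gt (lt_of_le_of_lt hl hx)
      calc (∑ k, P (A k)).toReal ≤ (∑ k, P {t | g k t ≠ 0}).toReal :=
            ENNReal.toReal_mono (lt_of_le_of_lt hsupp ENNReal.one_lt_top).ne hmono
        _ ≤ 1 := by
            have := ENNReal.toReal_mono ENNReal.one_ne_top hsupp
            simpa using this
    -- measure of union in real terms
    set r : ℝ≥0∞ := P (⋃ k, A k) with hrdef
    have hrne : r ≠ ⊤ := measure_ne_top P _
    have hprodval : (P (⋂ k, (A k)ᶜ)).toReal = ∏ k, (1 - q k) := by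
      rw [hip, ENNReal.toReal_prod]
      exact Finset.prod_congr rfl fun k _ => hcomplval k
    have hrval : r.toReal = 1 - ∏ k, (1 - q k) := by
      have h := congrArg ENNReal.toReal htot
      rw [ENNReal.toReal_add hrne (measure_ne_top P _), hprodval, ENNReal.toReal_one] at h
      linarith
    have hprod_le := prod_one_sub_le Finset.univ q hq0 hq1
    have hmain : S / 2 ≤ r.toReal := by
      rw [hrval]
      nlinarith [hprod_le, hS0, hS1]
    -- back to ENNReal
    have h2r : ((2 : ℝ≥0∞) * r) ≠ ⊤ := ENNReal.mul_ne_top (by norm_num) hrne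
    rw [hU l, ← hrdef]
    rw [← ENNReal.ofReal_toReal hsum_ne_top, ← ENNReal.ofReal_toReal h2r]
    apply ENNReal.ofReal_le_ofReal
    rw [ENNReal.toReal_mul, ← hStoReal]
    simp only [ENNReal.toReal_ofNat]
    linarith [hmain]
  -- now compare the rearrangements
  intro t ht
  unfold rearr
  set SD : Set ℝ := {l : ℝ | 0 ≤ l ∧ (∑ k, P {x | l < g k x}) ≤ ENNReal.ofReal t}
  set SE : Set ℝ := {l : ℝ | 0 ≤ l ∧ P {x | l < ⨆ k, g k x} ≤ ENNReal.ofReal (t / 2)}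
  have hsub : SE ⊆ SD := by
    rintro l ⟨hl0, hlE⟩
    refine ⟨hl0, ?_⟩
    calc (∑ k, P {x | l < g k x}) ≤ 2 * P {x | l < ⨆ k, g k x} := key l hl0
      _ ≤ 2 * ENNReal.ofReal (t / 2) := by gcongr
      _ = ENNReal.ofReal t := by
          rw [show (2 : ℝ≥0∞) = ENNReal.ofReal 2 by simp,
            ← ENNReal.ofReal_mul (by norm_num : (0:ℝ) ≤ 2)]
          congr 1
          ring
  have hne : SE.Nonempty := by
    -- the measures P {x | m < g k x} tend to 0 as m → ∞
    have htend : ∀ k : Fin n, Filter.Tendsto (fun m : ℕ => P {x | (m : ℝ) < g k x})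
        Filter.atTop (nhds 0) := by
      intro k
      have hanti : Antitone fun m : ℕ => {x | (m : ℝ) < g k x} := by
        intro a b hab x hx
        simp only [Set.mem_setOf_eq] at hx ⊢
        exact lt_of_le_of_lt (Nat.cast_le.mpr hab) hx
      have hempty : (⋂ m : ℕ, {x | (m : ℝ) < g k x}) = ∅ := by
        ext x
        simp only [Set.mem_iInter, Set.mem_setOf_eq, Set.mem_empty_iff_false, iff_false, not_forall,
          not_lt]
        obtain ⟨m, hm⟩ := exists_nat_gt (g k x)
        exact ⟨m, hm.le⟩
      have := tendsto_measure_iInter_atTop (μ := P)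
        (s := fun m : ℕ => {x | (m : ℝ) < g k x})
        (fun m => (hA k (m : ℝ)).nullMeasurableSet) hanti ⟨0, measure_ne_top P _⟩
      rw [hempty] at this
      simpa [Function.comp_def] using this
    have htendsum : Filter.Tendsto (fun m : ℕ => ∑ k, P {x | (m : ℝ) < g k x})
        Filter.atTop (nhds 0) := by
      have := tendsto_finset_sum Finset.univ (fun k _ => htend k)
      simpa using this
    have hpos2 : (0 : ℝ≥0∞) < ENNReal.ofReal (t / 2) := by
      rw [ENNReal.ofReal_pos]
      linarith
    have hev := htendsum.eventually_lt_const hpos2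
    obtain ⟨m, hm⟩ := hev.exists
    refine ⟨(m : ℝ), Nat.cast_nonneg m, ?_⟩
    calc P {x | (m : ℝ) < ⨆ k, g k x} = P (⋃ k, {x | (m : ℝ) < g k x}) := by rw [hU]
      _ ≤ ∑ k, P {x | (m : ℝ) < g k x} := measure_iUnion_fintype_le _ _
      _ ≤ ENNReal.ofReal (t / 2) := hm.le
  have hbdd : BddBelow SD := ⟨0, fun l hl => hl.1⟩
  exact csInf_le_csInf hbdd hne hsub
end

section
/- Let Ψ be an increasing function on [0,∞) with Ψ(0)=0 satisfying Ψ(2t) ≤ C_Ψ Ψ(t) for all t > 0. Let K be the Kruglov operator Kf(ω) = ∑_{n=1}^∞ ∑_{k=1}^n f(ω_k) χ_{A_n}(ω₀), where (A_n) are disjoint subsets of (0,1) with m(A_n) = 1/(e·n!) and the ω_k are independent uniform variables. Then for every nonnegative f ∈ L_Ψ(0,1), ∫₀¹ Ψ((Kf)(t)) dt ≤ (∑_{m=1}^∞ m^{c_Ψ+1}/(e·m!)) · ∫₀¹ Ψ(f(t)) dt, where c_Ψ = 2 log₂ C_Ψ; in particular the series converges and the constant depends only on Ψ. -/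
open MeasureTheory ProbabilityTheory
open scoped ENNReal

/-- The Kruglov operator `Kf(ω) = ∑_{n≥1} (∑_{k=1}^n f(ω_k)) χ_{A_n}(ω₀)`,
realized on a probability space carrying independent uniform variables
`W 0, W 1, W 2, …` (playing the roles of `ω₀, ω₁, ω₂, …`). -/
noncomputable def kruglov {Ω : Type*} (W : ℕ → Ω → ℝ) (A : ℕ → Set ℝ)
    (f : ℝ → ℝ) (ω : Ω) : ℝ :=
  ∑' n : ℕ, (∑ k ∈ Finset.Icc 1 n, f (W k ω)) * (A n).indicator (fun _ => (1 : ℝ)) (W 0 ω)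


lemma aux_summable {r : ℝ} (hr : 0 ≤ r) :
    Summable (fun m : ℕ => (m : ℝ) ^ r / (Real.exp 1 * m.factorial)) := by
  set N := ⌈r⌉₊ with hN
  have hsum : Summable (fun m : ℕ => (N.factorial : ℝ) * (Real.exp 1 ^ m / m.factorial)) :=
    (Real.summable_pow_div_factorial (Real.exp 1)).mul_left _
  have h1e : (1 : ℝ) ≤ Real.exp 1 := by
    have := Real.add_one_le_exp (1 : ℝ); linarith
  refine Summable.of_nonneg_of_le (fun m => by positivity) (fun m => ?_) hsum
  have hfacN : (1 : ℝ) ≤ N.factorial := by exact_mod_cast Nat.one_le_iff_ne_zero.mpr N.factorial_ne_zero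
  have hfacm : (1 : ℝ) ≤ m.factorial := by exact_mod_cast Nat.one_le_iff_ne_zero.mpr m.factorial_ne_zero
  rcases Nat.eq_zero_or_pos m with rfl | hm
  · have h0 : ((0 : ℕ) : ℝ) ^ r ≤ 1 := by
      simpa using Real.zero_rpow_le_one r
    have : ((0:ℕ):ℝ) ^ r / (Real.exp 1 * (Nat.factorial 0)) ≤ 1 := by
      rw [div_le_one (by positivity)]
      calc ((0:ℕ):ℝ) ^ r ≤ 1 := h0
        _ ≤ Real.exp 1 * (Nat.factorial 0) := by simpa using h1e
    calc ((0:ℕ):ℝ) ^ r / (Real.exp 1 * (Nat.factorial 0)) ≤ 1 := this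
      _ ≤ (N.factorial : ℝ) * (Real.exp 1 ^ 0 / (Nat.factorial 0)) := by simp [hfacN]
  · have hm1 : (1 : ℝ) ≤ (m : ℝ) := by exact_mod_cast hm
    have step1 : (m : ℝ) ^ r ≤ (m : ℝ) ^ N := by
      rw [← Real.rpow_natCast (m : ℝ) N]
      exact Real.rpow_le_rpow_of_exponent_le hm1 (Nat.le_ceil r)
    have step2 : (m : ℝ) ^ N ≤ N.factorial * Real.exp 1 ^ m := by
      have hterm : (m : ℝ) ^ N / N.factorial ≤ Real.exp m := by
        calc (m : ℝ) ^ N / N.factorial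
            ≤ ∑ i ∈ Finset.range (N + 1), (m : ℝ) ^ i / i.factorial :=
              Finset.single_le_sum (f := fun i => (m : ℝ) ^ i / i.factorial)
                (fun i _ => by positivity) (Finset.self_mem_range_succ N)
          _ ≤ Real.exp m := Real.sum_le_exp_of_nonneg (by positivity) _
      rw [Real.exp_one_pow]
      rw [div_le_iff₀ (by positivity)] at hterm
      linarith [hterm]
    calc (m : ℝ) ^ r / (Real.exp 1 * m.factorial)
        ≤ (m : ℝ) ^ r / m.factorial := by
          apply div_le_div_of_nonneg_left (by positivity) (by positivity)
          nlinarith [hfacm, h1e]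
      _ ≤ ((N.factorial : ℝ) * Real.exp 1 ^ m) / m.factorial := by
          gcongr
          exact le_trans step1 step2
      _ = (N.factorial : ℝ) * (Real.exp 1 ^ m / m.factorial) := by ring

lemma aux_doubling (Ψ : ℝ → ℝ) (CΨ : ℝ) (hC : 1 ≤ CΨ)
    (hΔ₂ : ∀ t : ℝ, 0 < t → Ψ (2 * t) ≤ CΨ * Ψ t) (hΨ0 : Ψ 0 = 0)
    (hΨnn : ∀ t, 0 ≤ t → 0 ≤ Ψ t) :
    ∀ j : ℕ, ∀ t : ℝ, 0 ≤ t → Ψ ((2 : ℝ) ^ j * t) ≤ CΨ ^ j * Ψ t := by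
  intro j
  induction j with
  | zero => intro t ht; simp
  | succ j ih =>
    intro t ht
    rcases eq_or_lt_of_le ht with h | h
    · simp [← h, hΨ0, mul_nonneg (pow_nonneg (le_trans zero_le_one hC) _) (le_of_eq rfl)]
    · have h2 : (0 : ℝ) < (2 : ℝ) ^ j * t := by positivity
      have : Ψ ((2 : ℝ) ^ (j + 1) * t) = Ψ (2 * ((2 : ℝ) ^ j * t)) := by ring_nf
      rw [this]
      calc Ψ (2 * ((2 : ℝ) ^ j * t)) ≤ CΨ * Ψ ((2 : ℝ) ^ j * t) := hΔ₂ _ h2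
        _ ≤ CΨ * (CΨ ^ j * Ψ t) := by
            have := ih t ht
            nlinarith [this, hC]
        _ = CΨ ^ (j + 1) * Ψ t := by ring

lemma aux_key (Ψ : ℝ → ℝ) (CΨ : ℝ) (hC : 1 ≤ CΨ) (hΨ0 : Ψ 0 = 0)
    (hmono : MonotoneOn Ψ (Set.Ici 0))
    (hΔ₂ : ∀ t : ℝ, 0 < t → Ψ (2 * t) ≤ CΨ * Ψ t)
    (n : ℕ) (hn : 1 ≤ n) (u : ℕ → ℝ) (hu : ∀ k, 0 ≤ u k) :
    Ψ (∑ k ∈ Finset.Icc 1 n, u k) ≤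
      (n : ℝ) ^ (2 * Real.logb 2 CΨ) * ∑ k ∈ Finset.Icc 1 n, Ψ (u k) := by
  have hCpos : (0 : ℝ) < CΨ := lt_of_lt_of_le one_pos hC
  have hΨnn : ∀ t : ℝ, 0 ≤ t → 0 ≤ Ψ t := fun t ht => by
    have := hmono (Set.self_mem_Ici) (Set.mem_Ici.mpr ht) ht
    rwa [hΨ0] at this
  set L := Real.logb 2 CΨ with hLdef
  have hL0 : 0 ≤ L := Real.logb_nonneg one_lt_two hC
  rcases eq_or_lt_of_le hn with h1 | h2
  · -- n = 1
    rw [← h1]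
    norm_num
  · -- 2 ≤ n
    have hn2 : 2 ≤ n := h2
    have hn2' : (2 : ℝ) ≤ (n : ℝ) := by exact_mod_cast hn2
    have hnpos : (0 : ℝ) < (n : ℝ) := by positivity
    have hne : (Finset.Icc 1 n).Nonempty := ⟨1, by simp [hn]⟩
    set M := (Finset.Icc 1 n).sup' hne u with hMdef
    obtain ⟨k₀, hk₀, hMk⟩ := Finset.exists_mem_eq_sup' hne u
    have hM0 : 0 ≤ M := by rw [hMdef, hMk]; exact hu k₀
    have hΨsum_nn : 0 ≤ ∑ k ∈ Finset.Icc 1 n, Ψ (u k) :=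
      Finset.sum_nonneg fun k _ => hΨnn _ (hu k)
    have hrpow_nn : (0:ℝ) ≤ (n : ℝ) ^ (2 * L) := Real.rpow_nonneg hnpos.le _
    rcases eq_or_lt_of_le hM0 with hMz | hMpos
    · -- M = 0 : all terms vanish
      have hall : ∀ k ∈ Finset.Icc 1 n, u k = 0 := fun k hk =>
        le_antisymm (by rw [hMz]; exact Finset.le_sup' u hk) (hu k)
      rw [Finset.sum_eq_zero hall, hΨ0]
      exact mul_nonneg hrpow_nn hΨsum_nn
    · set j := Nat.clog 2 n with hjdef
      have hjpos : 0 < j := Nat.clog_pos (by norm_num) hn2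
      have hnle : (n : ℝ) ≤ (2 : ℝ) ^ j := by
        exact_mod_cast (Nat.clog_le_iff_le_pow (by norm_num)).mp le_rfl
      have hjlt : (2 : ℕ) ^ (j - 1) < n :=
        (Nat.lt_clog_iff_pow_lt (by norm_num)).mp (Nat.sub_lt hjpos one_pos)
      -- step 1 : Ψ (∑ u) ≤ Ψ (2^j * M)
      have hsum_le : ∑ k ∈ Finset.Icc 1 n, u k ≤ (2 : ℝ) ^ j * M := by
        have h1 : ∑ k ∈ Finset.Icc 1 n, u k ≤ (Finset.Icc 1 n).card • M :=
          Finset.sum_le_card_nsmul _ _ _ fun k hk => Finset.le_sup' u hk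
        have hcard : (Finset.Icc 1 n).card = n := by
          rw [Nat.card_Icc]; omega
        rw [hcard] at h1
        calc ∑ k ∈ Finset.Icc 1 n, u k ≤ (n : ℝ) * M := by
              simpa [nsmul_eq_mul] using h1
          _ ≤ (2 : ℝ) ^ j * M := mul_le_mul_of_nonneg_right hnle hM0
      have hsum_nn : 0 ≤ ∑ k ∈ Finset.Icc 1 n, u k := Finset.sum_nonneg fun k _ => hu k
      have step1 : Ψ (∑ k ∈ Finset.Icc 1 n, u k) ≤ Ψ ((2 : ℝ) ^ j * M) :=
        hmono (Set.mem_Ici.mpr hsum_nn) (Set.mem_Ici.mpr (by positivity)) hsum_le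
      have step2 : Ψ ((2 : ℝ) ^ j * M) ≤ CΨ ^ j * Ψ M :=
        aux_doubling Ψ CΨ hC hΔ₂ hΨ0 hΨnn j M hM0
      -- step 3 : CΨ ^ j ≤ n ^ (2L)
      have hjle : (j : ℝ) ≤ Real.logb 2 (n : ℝ) + 1 := by
        have h2r : ((2 : ℝ)) ^ ((j - 1 : ℕ)) < (n : ℝ) := by exact_mod_cast hjlt
        have hlogle : Real.logb 2 ((2:ℝ) ^ ((j-1:ℕ))) ≤ Real.logb 2 (n : ℝ) :=
          Real.logb_le_logb_of_le one_lt_two (by positivity) h2r.le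
        rw [Real.logb_pow, Real.logb_self_eq_one (by norm_num)] at hlogle
        have hcast : ((j - 1 : ℕ) : ℝ) = (j : ℝ) - 1 := by
          push_cast [Nat.cast_sub hjpos]; ring
        rw [hcast] at hlogle
        linarith
      have hCj : CΨ ^ j ≤ (n : ℝ) ^ (2 * L) := by
        have e1 : CΨ ^ j = CΨ ^ (j : ℝ) := (Real.rpow_natCast _ _).symm
        have e2 : CΨ ^ (j : ℝ) ≤ CΨ ^ (Real.logb 2 (n:ℝ) + 1) :=
          Real.rpow_le_rpow_of_exponent_le hC hjle
        have e3 : CΨ ^ (Real.logb 2 (n:ℝ) + 1) = CΨ * CΨ ^ (Real.logb 2 (n:ℝ)) := by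
          rw [Real.rpow_add hCpos, Real.rpow_one]; ring
        have e4 : CΨ ^ Real.logb 2 (n : ℝ) = (n : ℝ) ^ L := by
          rw [Real.rpow_def_of_pos hCpos, Real.rpow_def_of_pos hnpos, hLdef,
            Real.logb, Real.logb]
          ring_nf
        have e5 : CΨ ≤ (n : ℝ) ^ L := by
          have : CΨ = (2 : ℝ) ^ L := (Real.rpow_logb two_pos (by norm_num) hCpos).symm
          rw [this]
          exact Real.rpow_le_rpow (by norm_num) hn2' hL0
        have e6 : (n:ℝ) ^ L * (n:ℝ) ^ L = (n:ℝ) ^ (2 * L) := by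
          rw [← Real.rpow_add hnpos]; ring_nf
        calc CΨ ^ j = CΨ ^ (j : ℝ) := e1
          _ ≤ CΨ ^ (Real.logb 2 (n:ℝ) + 1) := e2
          _ = CΨ * CΨ ^ (Real.logb 2 (n:ℝ)) := e3
          _ = CΨ * (n : ℝ) ^ L := by rw [e4]
          _ ≤ (n:ℝ) ^ L * (n:ℝ) ^ L := mul_le_mul_of_nonneg_right e5 (Real.rpow_nonneg hnpos.le _)
          _ = (n:ℝ) ^ (2 * L) := e6
      have hΨM : Ψ M ≤ ∑ k ∈ Finset.Icc 1 n, Ψ (u k) := by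
        rw [hMdef, hMk]
        exact Finset.single_le_sum (fun k _ => hΨnn _ (hu k)) hk₀
      calc Ψ (∑ k ∈ Finset.Icc 1 n, u k) ≤ CΨ ^ j * Ψ M := le_trans step1 step2
        _ ≤ CΨ ^ j * ∑ k ∈ Finset.Icc 1 n, Ψ (u k) :=
            mul_le_mul_of_nonneg_left hΨM (pow_nonneg hCpos.le j)
        _ ≤ (n : ℝ) ^ (2 * L) * ∑ k ∈ Finset.Icc 1 n, Ψ (u k) :=
            mul_le_mul_of_nonneg_right hCj hΨsum_nn

/-- for an increasing `Δ₂` function `Ψ` with `Ψ(0) = 0` and the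
Kruglov operator `K` (built from disjoint sets `A_n ⊂ (0,1)` of measure
`1/(e·n!)`), for every nonnegative `f ∈ L_Ψ(0,1)` one has
`∫ Ψ(Kf) ≤ (∑_{m≥1} m^{c_Ψ+1}/(e·m!)) ∫₀¹ Ψ(f)` with `c_Ψ = 2 log₂ C_Ψ`;
in particular the series converges. -/
theorem stmt_16 {Ω : Type*} [MeasurableSpace Ω] (Pr : Measure Ω) [IsProbabilityMeasure Pr]
    (W : ℕ → Ω → ℝ) (hWmeas : ∀ k, Measurable (W k))
    (hWindep : iIndepFun W Pr)
    (hWunif : ∀ k, Pr.map (W k) = volume.restrict (Set.Ioo 0 1))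
    (A : ℕ → Set ℝ) (hAmeas : ∀ n, MeasurableSet (A n))
    (hAsub : ∀ n, 1 ≤ n → A n ⊆ Set.Ioo 0 1)
    (hAdisj : ∀ m n, 1 ≤ m → 1 ≤ n → m ≠ n → Disjoint (A m) (A n))
    (hAvol : ∀ n, 1 ≤ n →
      volume (A n) = ENNReal.ofReal (1 / (Real.exp 1 * n.factorial)))
    (Ψ : ℝ → ℝ) (CΨ : ℝ) (hC : 1 ≤ CΨ) (hΨ0 : Ψ 0 = 0)
    (hmono : MonotoneOn Ψ (Set.Ici 0))
    (hΔ₂ : ∀ t : ℝ, 0 < t → Ψ (2 * t) ≤ CΨ * Ψ t)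
    (f : ℝ → ℝ) (hfmeas : Measurable f) (hfpos : ∀ t, 0 ≤ f t)
    (hfint : IntegrableOn (fun t => Ψ (f t)) (Set.Ioo 0 1)) :
    Summable (fun m : ℕ =>
      (m : ℝ) ^ (2 * Real.logb 2 CΨ + 1) / (Real.exp 1 * m.factorial)) ∧
    ∫ ω, Ψ (kruglov W A f ω) ∂Pr ≤
      (∑' m : ℕ, (m : ℝ) ^ (2 * Real.logb 2 CΨ + 1) / (Real.exp 1 * m.factorial)) *
        ∫ t in Set.Ioo (0 : ℝ) 1, Ψ (f t) := by
  have hCpos : (0 : ℝ) < CΨ := lt_of_lt_of_le one_pos hC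
  set c : ℝ := 2 * Real.logb 2 CΨ with hc
  have hc0 : 0 ≤ c := by
    have := Real.logb_nonneg (by norm_num : (1:ℝ) < 2) hC
    rw [hc]; linarith
  have hsum : Summable (fun m : ℕ => (m : ℝ) ^ (c + 1) / (Real.exp 1 * m.factorial)) :=
    aux_summable (by linarith)
  refine ⟨hsum, ?_⟩
  have hΨnn : ∀ t : ℝ, 0 ≤ t → 0 ≤ Ψ t := fun t ht => by
    have := hmono (Set.self_mem_Ici) (Set.mem_Ici.mpr ht) ht
    rwa [hΨ0] at this
  -- notation
  set S : ℕ → Ω → ℝ := fun n ω => ∑ k ∈ Finset.Icc 1 n, f (W k ω) with hS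
  set B : ℕ → Set Ω := fun n => W 0 ⁻¹' (A n) with hB
  have hSmeas : ∀ n, Measurable (S n) := fun n =>
    Finset.measurable_sum _ fun k _ => hfmeas.comp (hWmeas k)
  have hSnn : ∀ n ω, 0 ≤ S n ω := fun n ω => Finset.sum_nonneg fun k _ => hfpos _
  have hBmeas : ∀ n, MeasurableSet (B n) := fun n => (hWmeas 0) (hAmeas n)
  -- monotone extension of Ψ
  set Ψ' : ℝ → ℝ := fun t => Ψ (max t 0) with hΨ'def
  have hΨ'mono : Monotone Ψ' := fun a b hab =>
    hmono (Set.mem_Ici.mpr (le_max_right a 0)) (Set.mem_Ici.mpr (le_max_right b 0))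
      (max_le_max hab le_rfl)
  have hΨ'meas : Measurable Ψ' := hΨ'mono.measurable
  have hΨ'eq : ∀ t : ℝ, 0 ≤ t → Ψ' t = Ψ t := fun t ht => by
    rw [hΨ'def]; simp only []; rw [max_eq_left ht]
  have hΨ'nn : ∀ t : ℝ, 0 ≤ Ψ' t := fun t => hΨnn _ (le_max_right t 0)
  have hmeask : ∀ k : ℕ, Measurable fun ω : Ω => ENNReal.ofReal (Ψ' (f (W k ω))) :=
    fun k => (hΨ'meas.comp (hfmeas.comp (hWmeas k))).ennreal_ofReal
  -- values of the Kruglov operator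
  have hK_mem : ∀ ω n, 1 ≤ n → W 0 ω ∈ A n → kruglov W A f ω = S n ω := by
    intro ω n hn hmem
    rw [kruglov, tsum_eq_single n ?_]
    · rw [Set.indicator_of_mem hmem]; simp [hS]
    · intro b hb
      rcases Nat.eq_zero_or_pos b with rfl | hb1
      · simp
      · have hnot : W 0 ω ∉ A b := fun hmem' =>
          Set.disjoint_left.mp (hAdisj b n hb1 hn hb) hmem' hmem
        rw [Set.indicator_of_notMem hnot, mul_zero]
  have hK_zero : ∀ ω, (∀ n, 1 ≤ n → W 0 ω ∉ A n) → kruglov W A f ω = 0 := by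
    intro ω h
    rw [kruglov]
    have : ∀ n : ℕ, (∑ k ∈ Finset.Icc 1 n, f (W k ω)) *
        (A n).indicator (fun _ => (1 : ℝ)) (W 0 ω) = 0 := by
      intro n
      rcases Nat.eq_zero_or_pos n with rfl | h1
      · simp
      · rw [Set.indicator_of_notMem (h n h1), mul_zero]
    simp [this]
  have hKnn : ∀ ω, 0 ≤ kruglov W A f ω := by
    intro ω
    by_cases h : ∃ n, 1 ≤ n ∧ W 0 ω ∈ A n
    · obtain ⟨n, hn, hmem⟩ := h
      rw [hK_mem ω n hn hmem]; exact hSnn n ω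
    · push_neg at h
      rw [hK_zero ω h]
  -- measurability of kruglov
  have hKeq : kruglov W A f = fun ω =>
      (∑' n : ℕ, ENNReal.ofReal ((B n).indicator (S n) ω)).toReal := by
    funext ω
    by_cases h : ∃ n, 1 ≤ n ∧ W 0 ω ∈ A n
    · obtain ⟨n, hn, hmem⟩ := h
      have hmemB : ω ∈ B n := hmem
      rw [hK_mem ω n hn hmem, tsum_eq_single n ?_]
      · rw [Set.indicator_of_mem hmemB, ENNReal.toReal_ofReal (hSnn n ω)]
      · intro b hb
        rcases Nat.eq_zero_or_pos b with rfl | hb1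
        · have : S 0 ω = 0 := by simp [hS]
          by_cases hm : ω ∈ B 0
          · rw [Set.indicator_of_mem hm, this]; simp
          · rw [Set.indicator_of_notMem hm]; simp
        · have hnotB : ω ∉ B b := fun hmem' =>
            Set.disjoint_left.mp (hAdisj b n hb1 hn hb) hmem' hmem
          rw [Set.indicator_of_notMem hnotB]; simp
    · push_neg at h
      rw [hK_zero ω h]
      have : ∀ n : ℕ, ENNReal.ofReal ((B n).indicator (S n) ω) = 0 := by
        intro n
        rcases Nat.eq_zero_or_pos n with rfl | h1
        · have : S 0 ω = 0 := by simp [hS]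
          by_cases hm : ω ∈ B 0
          · rw [Set.indicator_of_mem hm, this]; simp
          · rw [Set.indicator_of_notMem hm]; simp
        · rw [Set.indicator_of_notMem (show ω ∉ B n from h n h1)]; simp
      simp [this]
  have hKmeas : Measurable (kruglov W A f) := by
    rw [hKeq]
    exact (Measurable.ennreal_tsum fun n =>
      ((hSmeas n).indicator (hBmeas n)).ennreal_ofReal).ennreal_toReal
  -- the dominating functions
  set G : ℕ → Ω → ℝ≥0∞ := fun n ω => (B n).indicator
    (fun ω => ENNReal.ofReal ((n : ℝ) ^ c * ∑ k ∈ Finset.Icc 1 n, Ψ' (f (W k ω)))) ω with hG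
  have hGmeas : ∀ n, Measurable (G n) := fun n =>
    Measurable.indicator ((measurable_const.mul (Finset.measurable_sum _ fun k _ =>
      (hΨ'meas.comp (hfmeas.comp (hWmeas k))))).ennreal_ofReal) (hBmeas n)
  -- pointwise bound
  have hpoint : ∀ ω, ENNReal.ofReal (Ψ (kruglov W A f ω)) ≤ ∑' n, G n ω := by
    intro ω
    by_cases h : ∃ n, 1 ≤ n ∧ W 0 ω ∈ A n
    · obtain ⟨n, hn, hmem⟩ := h
      have hmemB : ω ∈ B n := hmem
      rw [hK_mem ω n hn hmem]
      refine le_trans ?_ (ENNReal.le_tsum n)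
      simp only [hG]
      rw [Set.indicator_of_mem hmemB]
      apply ENNReal.ofReal_le_ofReal
      have key := aux_key Ψ CΨ hC hΨ0 hmono hΔ₂ n hn (fun k => f (W k ω))
        (fun k => hfpos _)
      simp only [hS]
      refine le_trans key ?_
      apply mul_le_mul_of_nonneg_left _ (Real.rpow_nonneg (Nat.cast_nonneg n) c)
      apply le_of_eq
      exact Finset.sum_congr rfl fun k _ => (hΨ'eq _ (hfpos _)).symm
    · push_neg at h
      rw [hK_zero ω h, hΨ0]
      simp
  -- the value of the integral of f under each W k
  set I : ℝ := ∫ t in Set.Ioo (0 : ℝ) 1, Ψ (f t) with hI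
  have hI_nn : 0 ≤ I := integral_nonneg fun t => hΨnn _ (hfpos t)
  have hlint_f : ∀ k : ℕ, ∫⁻ ω, ENNReal.ofReal (Ψ' (f (W k ω))) ∂Pr = ENNReal.ofReal I := by
    intro k
    have hgmeas : Measurable fun x : ℝ => ENNReal.ofReal (Ψ' (f x)) :=
      (hΨ'meas.comp hfmeas).ennreal_ofReal
    have h1 : ∫⁻ ω, ENNReal.ofReal (Ψ' (f (W k ω))) ∂Pr
        = ∫⁻ x, ENNReal.ofReal (Ψ' (f x)) ∂(Pr.map (W k)) :=
      (lintegral_map hgmeas (hWmeas k)).symm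
    rw [h1, hWunif k]
    have heq : ∀ x : ℝ, Ψ' (f x) = Ψ (f x) := fun x => hΨ'eq _ (hfpos x)
    have hint' : Integrable (fun x => Ψ' (f x)) (volume.restrict (Set.Ioo (0:ℝ) 1)) := by
      refine Integrable.congr hfint (ae_of_all _ fun x => (heq x).symm)
    rw [← ofReal_integral_eq_lintegral_ofReal hint' (ae_of_all _ fun x => hΨ'nn _)]
    congr 1
    rw [hI]
    exact integral_congr_ae (ae_of_all _ fun x => (heq x).symm) |>.symm
  have hPrB : ∀ n, 1 ≤ n → Pr (B n) = ENNReal.ofReal (1 / (Real.exp 1 * n.factorial)) := by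
    intro n hn
    have h1 : Pr (B n) = Pr.map (W 0) (A n) :=
      (Measure.map_apply (hWmeas 0) (hAmeas n)).symm
    rw [h1, hWunif 0, Measure.restrict_apply (hAmeas n),
      Set.inter_eq_self_of_subset_left (hAsub n hn), hAvol n hn]
  -- lintegral of each G n
  have hTn : ∀ n, 1 ≤ n → ∫⁻ ω, G n ω ∂Pr
      = ENNReal.ofReal ((n : ℝ) ^ (c + 1) / (Real.exp 1 * n.factorial)) * ENNReal.ofReal I := by
    intro n hn
    have hnR : (0:ℝ) < n := by exact_mod_cast hn
    simp only [hG]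
    rw [lintegral_indicator (hBmeas n) _]
    have hofr : ∀ ω : Ω, ENNReal.ofReal ((n : ℝ) ^ c * ∑ k ∈ Finset.Icc 1 n, Ψ' (f (W k ω)))
        = ENNReal.ofReal ((n : ℝ) ^ c)
          * ∑ k ∈ Finset.Icc 1 n, ENNReal.ofReal (Ψ' (f (W k ω))) := by
      intro ω
      rw [ENNReal.ofReal_mul (Real.rpow_nonneg (Nat.cast_nonneg n) c),
        ENNReal.ofReal_sum_of_nonneg fun k _ => hΨ'nn _]
    simp_rw [hofr]
    rw [lintegral_const_mul _ (Finset.measurable_sum _ fun k _ => hmeask k)]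
    rw [lintegral_finset_sum _ fun k _ => hmeask k]
    have hkterm : ∀ k ∈ Finset.Icc 1 n,
        ∫⁻ ω in B n, ENNReal.ofReal (Ψ' (f (W k ω))) ∂Pr
          = ENNReal.ofReal (1 / (Real.exp 1 * n.factorial)) * ENNReal.ofReal I := by
      intro k hk
      have hk1 : 1 ≤ k := (Finset.mem_Icc.mp hk).1
      have hindic : ∀ ω : Ω, (B n).indicator
          (fun ω => ENNReal.ofReal (Ψ' (f (W k ω)))) ω
          = ((A n).indicator (fun _ => (1 : ℝ≥0∞)) (W 0 ω))
            * ENNReal.ofReal (Ψ' (f (W k ω))) := by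
        intro ω
        by_cases hm : ω ∈ B n
        · rw [Set.indicator_of_mem hm,
            Set.indicator_of_mem (show W 0 ω ∈ A n from hm), one_mul]
        · rw [Set.indicator_of_notMem hm,
            Set.indicator_of_notMem (show W 0 ω ∉ A n from hm), zero_mul]
      rw [← lintegral_indicator (hBmeas n) _]
      simp_rw [hindic]
      have hindep : IndepFun (fun ω => (A n).indicator (fun _ => (1 : ℝ≥0∞)) (W 0 ω))
          (fun ω => ENNReal.ofReal (Ψ' (f (W k ω)))) Pr := by
        have h0k : (0 : ℕ) ≠ k := by omega
        exact (hWindep.indepFun h0k).comp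
          (measurable_const.indicator (hAmeas n))
          ((hΨ'meas.comp hfmeas).ennreal_ofReal)
      have hXmeas : Measurable fun ω : Ω => (A n).indicator (fun _ => (1:ℝ≥0∞)) (W 0 ω) :=
        (measurable_const.indicator (hAmeas n)).comp (hWmeas 0)
      rw [lintegral_mul_eq_lintegral_mul_lintegral_of_indepFun''
        hXmeas.aemeasurable ((hmeask k).aemeasurable) hindep]
      have hfirst : ∫⁻ ω, (A n).indicator (fun _ => (1 : ℝ≥0∞)) (W 0 ω) ∂Pr = Pr (B n) := by
        have : ∀ ω : Ω, (A n).indicator (fun _ => (1 : ℝ≥0∞)) (W 0 ω)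
            = (B n).indicator (fun _ => (1 : ℝ≥0∞)) ω := by
          intro ω
          by_cases hm : ω ∈ B n
          · rw [Set.indicator_of_mem (show W 0 ω ∈ A n from hm), Set.indicator_of_mem hm]
          · rw [Set.indicator_of_notMem (show W 0 ω ∉ A n from hm),
              Set.indicator_of_notMem hm]
        simp_rw [this]
        exact lintegral_indicator_one (hBmeas n)
      rw [hfirst, hlint_f k, hPrB n hn]
    rw [Finset.sum_congr rfl hkterm, Finset.sum_const, Nat.card_Icc]
    simp only [Nat.add_sub_cancel]
    rw [nsmul_eq_mul]
    have hcast : (n : ℝ≥0∞) = ENNReal.ofReal (n : ℝ) := by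
      rw [ENNReal.ofReal_natCast]
    rw [hcast, ← mul_assoc, ← mul_assoc, ← ENNReal.ofReal_mul (Real.rpow_nonneg
      (Nat.cast_nonneg n) c), ← ENNReal.ofReal_mul (by positivity)]
    congr 2
    have hr1 : (n:ℝ) ^ (c+1) = (n:ℝ) ^ c * (n:ℝ) := by
      rw [Real.rpow_add_one (ne_of_gt hnR)]
    rw [hr1]
    field_simp
  have hG0 : ∫⁻ ω, G 0 ω ∂Pr = 0 := by
    have : G 0 = fun _ => 0 := by
      funext ω
      simp only [hG]; simp
    rw [this]; simp
  -- main lintegral bound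
  have hmain : ∫⁻ ω, ENNReal.ofReal (Ψ (kruglov W A f ω)) ∂Pr
      ≤ ENNReal.ofReal (∑' m : ℕ, (m : ℝ) ^ (c + 1) / (Real.exp 1 * m.factorial))
        * ENNReal.ofReal I := by
    calc ∫⁻ ω, ENNReal.ofReal (Ψ (kruglov W A f ω)) ∂Pr
        ≤ ∫⁻ ω, ∑' n, G n ω ∂Pr := lintegral_mono hpoint
      _ = ∑' n, ∫⁻ ω, G n ω ∂Pr := lintegral_tsum fun n => (hGmeas n).aemeasurable
      _ = ∑' n : ℕ, ENNReal.ofReal ((n : ℝ) ^ (c + 1) / (Real.exp 1 * n.factorial))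
            * ENNReal.ofReal I := by
          apply tsum_congr
          intro n
          rcases Nat.eq_zero_or_pos n with rfl | h1
          · rw [hG0]
            have : ((0:ℕ) : ℝ) ^ (c + 1) = 0 := by
              rw [Nat.cast_zero, Real.zero_rpow (by linarith)]
            rw [this]
            simp
          · exact hTn n h1
      _ = (∑' n : ℕ, ENNReal.ofReal ((n : ℝ) ^ (c + 1) / (Real.exp 1 * n.factorial)))
            * ENNReal.ofReal I := ENNReal.tsum_mul_right
      _ = ENNReal.ofReal (∑' m : ℕ, (m : ℝ) ^ (c + 1) / (Real.exp 1 * m.factorial))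
            * ENNReal.ofReal I := by
          rw [ENNReal.ofReal_tsum_of_nonneg (fun n => by positivity) hsum]
  -- conclude
  have hconst_nn : 0 ≤ ∑' m : ℕ, (m : ℝ) ^ (c + 1) / (Real.exp 1 * m.factorial) :=
    tsum_nonneg fun m => by positivity
  have hmeasK : Measurable fun ω => Ψ (kruglov W A f ω) := by
    have heq : (fun ω => Ψ (kruglov W A f ω)) = fun ω => Ψ' (kruglov W A f ω) :=
      funext fun ω => (hΨ'eq _ (hKnn ω)).symm
    rw [heq]
    exact hΨ'meas.comp hKmeas
  rw [integral_eq_lintegral_of_nonneg_ae (ae_of_all _ fun ω => hΨnn _ (hKnn ω))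
    hmeasK.aestronglyMeasurable]
  calc (∫⁻ ω, ENNReal.ofReal (Ψ (kruglov W A f ω)) ∂Pr).toReal
      ≤ (ENNReal.ofReal (∑' m : ℕ, (m : ℝ) ^ (c + 1) / (Real.exp 1 * m.factorial))
          * ENNReal.ofReal I).toReal := by
        apply ENNReal.toReal_mono _ hmain
        exact ENNReal.mul_ne_top ENNReal.ofReal_ne_top ENNReal.ofReal_ne_top
    _ = (∑' m : ℕ, (m : ℝ) ^ (c + 1) / (Real.exp 1 * m.factorial)) * I := by
        rw [← ENNReal.ofReal_mul hconst_nn,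
          ENNReal.toReal_ofReal (mul_nonneg hconst_nn hI_nn)]
end

section
/- For every p ≥ 1, the L_p-norm of a Poisson random variable π with parameter 1 satisfies ‖π‖_p ≈ p / log(ep), i.e. there exist absolute constants 0 < c < C such that c·p/log(ep) ≤ (𝔼 π^p)^{1/p} ≤ C·p/log(ep) for all p ≥ 1. -/
open Real

lemma aux_exp_tsum (x : ℝ) : (∑' n : ℕ, x ^ n / n.factorial) = Real.exp x := by
  rw [Real.exp_eq_exp_ℝ]
  exact (NormedSpace.expSeries_div_hasSum_exp x).tsum_eq

lemma key_rpow_le (p t x : ℝ) (hp : 0 < p) (ht : 0 < t) (hx : 0 ≤ x) :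
    x ^ p ≤ (p / (Real.exp 1 * t)) ^ p * Real.exp (t * x) := by
  rcases eq_or_lt_of_le hx with h | h
  · rw [← h, Real.zero_rpow hp.ne']
    positivity
  · have hpt : 0 < p / t := div_pos hp ht
    have h1 : Real.log (x * t / p) ≤ x * t / p - 1 :=
      Real.log_le_sub_one_of_pos (by positivity)
    have h2 : Real.log x = Real.log (x * t / p) + Real.log (p / t) := by
      rw [← Real.log_mul (by positivity) (by positivity)]
      congr 1
      field_simp
    have hx' : x ^ p = Real.exp (Real.log x * p) := by
      rw [Real.rpow_def_of_pos h]
    have hA : (p / (Real.exp 1 * t)) ^ p = Real.exp ((Real.log (p / t) - 1) * p) := by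
      rw [Real.rpow_def_of_pos (by positivity)]
      congr 1
      rw [div_mul_eq_div_div, Real.log_div (by positivity) ht.ne',
        Real.log_div hp.ne' (Real.exp_ne_zero 1), Real.log_exp,
        Real.log_div hp.ne' ht.ne']
      ring
    rw [hx', hA, ← Real.exp_add]
    apply Real.exp_le_exp.mpr
    have : Real.log x * p ≤ (x * t / p - 1 + Real.log (p / t)) * p := by
      apply mul_le_mul_of_nonneg_right _ hp.le
      rw [h2]; linarith
    calc Real.log x * p ≤ (x * t / p - 1 + Real.log (p / t)) * p := this
      _ = (Real.log (p/t) - 1) * p + t * x := by field_simp; ring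

set_option maxHeartbeats 1000000 in
/-- the `L_p`-norm of a Poisson random variable `π` with
parameter `1` (i.e. `ℙ(π = n) = 1/(e·n!)`) satisfies
`(𝔼 π^p)^{1/p} ≈ p / log(ep)` uniformly in `p ≥ 1`. -/
theorem stmt_18 :
    ∃ c C : ℝ, 0 < c ∧ c ≤ C ∧
      ∀ p : ℝ, 1 ≤ p →
        c * (p / Real.log (Real.exp 1 * p)) ≤
            (∑' n : ℕ, (n : ℝ) ^ p / (Real.exp 1 * n.factorial)) ^ (1 / p) ∧
          (∑' n : ℕ, (n : ℝ) ^ p / (Real.exp 1 * n.factorial)) ^ (1 / p) ≤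
            C * (p / Real.log (Real.exp 1 * p)) := by
  refine ⟨Real.exp (-5), Real.exp (Real.exp 1 - 1), Real.exp_pos _, ?_, ?_⟩
  · apply Real.exp_le_exp.mpr
    linarith [Real.add_one_le_exp (1:ℝ)]
  intro p hp
  have hp0 : 0 < p := lt_of_lt_of_le one_pos hp
  have hlogp : 0 ≤ Real.log p := Real.log_nonneg hp
  set L := Real.log (Real.exp 1 * p) with hLdef
  have hL : L = 1 + Real.log p := by
    rw [hLdef, Real.log_mul (Real.exp_ne_zero 1) hp0.ne', Real.log_exp]
  have hL1 : 1 ≤ L := by rw [hL]; linarith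
  have hL0 : 0 < L := lt_of_lt_of_le one_pos hL1
  have hexpL : Real.exp L = Real.exp 1 * p := Real.exp_log (by positivity)
  have hpL1 : 1 ≤ p / L := by
    rw [le_div_iff₀ hL0, one_mul, hL]
    linarith [Real.log_le_sub_one_of_pos hp0]
  set f : ℕ → ℝ := fun n => (n : ℝ) ^ p / (Real.exp 1 * n.factorial) with hf
  set A := (p / (Real.exp 1 * L)) ^ p with hA
  have hA0 : 0 < A := Real.rpow_pos_of_pos (by positivity) _
  have hg : Summable (fun n : ℕ => A / Real.exp 1 * ((Real.exp L) ^ n / n.factorial)) :=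
    (Real.summable_pow_div_factorial (Real.exp L)).mul_left _
  have hfg : ∀ n : ℕ, f n ≤ A / Real.exp 1 * ((Real.exp L) ^ n / n.factorial) := by
    intro n
    have hfact : (0:ℝ) < n.factorial := by exact_mod_cast n.factorial_pos
    have h1 : (n : ℝ) ^ p ≤ A * Real.exp (L * n) := key_rpow_le p L n hp0 hL0 (Nat.cast_nonneg n)
    calc f n = (n : ℝ) ^ p / (Real.exp 1 * n.factorial) := rfl
      _ ≤ (A * Real.exp (L * n)) / (Real.exp 1 * n.factorial) := by gcongr
      _ = A / Real.exp 1 * ((Real.exp L) ^ n / n.factorial) := by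
          rw [mul_comm L (n:ℝ), Real.exp_nat_mul]
          field_simp
  have hsumf : Summable f := Summable.of_nonneg_of_le (fun n => by positivity) hfg hg
  have hSnn : 0 ≤ ∑' n, f n := tsum_nonneg (fun n => by positivity)
  constructor
  · -- lower bound
    set m := ⌈p / L⌉₊ with hmdef
    have hm1 : 1 ≤ m := Nat.one_le_ceil_iff.mpr (by positivity)
    have hm0 : (0:ℝ) < m := by exact_mod_cast hm1
    have hm1' : (1:ℝ) ≤ m := by exact_mod_cast hm1
    have hmge : p / L ≤ (m : ℝ) := Nat.le_ceil _
    have hmle : (m : ℝ) ≤ 2 * p / L := by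
      have h1 : (m:ℝ) < p / L + 1 := Nat.ceil_lt_add_one (by positivity)
      have h2 : 2 * p / L = p / L + p / L := by ring
      linarith
    have hmlog : 0 ≤ Real.log m := Real.log_nonneg hm1'
    have hlogm : Real.log m ≤ L := by
      have hm2p : (m:ℝ) ≤ 2 * p := hmle.trans (div_le_self (by positivity) hL1)
      calc Real.log m ≤ Real.log (2 * p) := Real.log_le_log hm0 hm2p
        _ = Real.log 2 + Real.log p := Real.log_mul two_ne_zero hp0.ne'
        _ ≤ 1 + Real.log p := by
            linarith [Real.log_le_sub_one_of_pos (by norm_num : (0:ℝ) < 2)]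
        _ = L := hL.symm
    have hmlogm : (m:ℝ) * Real.log m ≤ 2 * p := by
      calc (m:ℝ) * Real.log m ≤ (2 * p / L) * L := mul_le_mul hmle hlogm hmlog (by positivity)
        _ = 2 * p := by field_simp
    have hmm : ((m:ℝ)) ^ (m:ℕ) = Real.exp ((m:ℕ) * Real.log m) := by
      rw [Real.exp_nat_mul, Real.exp_log hm0]
    have hxval : (m:ℝ) ^ p / (Real.exp 1 * (m:ℝ) ^ (m:ℕ))
        = Real.exp (Real.log m * p - (1 + m * Real.log m)) := by
      rw [Real.rpow_def_of_pos hm0, hmm, ← Real.exp_add, ← Real.exp_sub]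
    have hfactle : (m.factorial : ℝ) ≤ (m:ℝ) ^ (m:ℕ) := by
      exact_mod_cast Nat.factorial_le_pow m
    have hfactpos : (0:ℝ) < m.factorial := by exact_mod_cast m.factorial_pos
    have hxle : (m:ℝ) ^ p / (Real.exp 1 * (m:ℝ) ^ (m:ℕ)) ≤ f m := by
      show _ ≤ (m:ℝ) ^ p / (Real.exp 1 * m.factorial)
      apply div_le_div_of_nonneg_left (Real.rpow_nonneg hm0.le p) (by positivity)
      gcongr
    have hfmS : f m ≤ ∑' n, f n := hsumf.le_tsum m (fun b _ => by positivity)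
    have key : Real.exp (-5) * (p / L) ≤
        ((m:ℝ) ^ p / (Real.exp 1 * (m:ℝ) ^ (m:ℕ))) ^ (1/p) := by
      rw [hxval, ← Real.exp_mul]
      calc Real.exp (-5) * (p / L) ≤ Real.exp (-5) * m := by
            gcongr
        _ = Real.exp (Real.log m - 5) := by
            rw [Real.exp_sub, Real.exp_log hm0, Real.exp_neg]
            ring
        _ ≤ Real.exp ((Real.log m * p - (1 + m * Real.log m)) * (1/p)) := by
            apply Real.exp_le_exp.mpr
            rw [mul_one_div, le_div_iff₀ hp0]
            nlinarith
    refine key.trans ?_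
    apply Real.rpow_le_rpow (by positivity) (hxle.trans hfmS) (by positivity)
  · -- upper bound
    have hS : ∑' n, f n ≤ A * Real.exp (Real.exp 1 * p - 1) := by
      calc ∑' n, f n ≤ ∑' n, A / Real.exp 1 * ((Real.exp L) ^ n / n.factorial) :=
            Summable.tsum_le_tsum hfg hsumf hg
        _ = A / Real.exp 1 * Real.exp (Real.exp L) := by
            rw [tsum_mul_left, aux_exp_tsum]
        _ = A * Real.exp (Real.exp 1 * p - 1) := by
            rw [hexpL, Real.exp_sub]
            ring
    calc (∑' n, f n) ^ (1/p) ≤ (A * Real.exp (Real.exp 1 * p - 1)) ^ (1/p) :=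
          Real.rpow_le_rpow hSnn hS (by positivity)
      _ = (p / (Real.exp 1 * L)) * Real.exp ((Real.exp 1 * p - 1) * (1/p)) := by
          rw [Real.mul_rpow hA0.le (Real.exp_pos _).le, hA,
            ← Real.rpow_mul (by positivity), mul_one_div_cancel hp0.ne',
            Real.rpow_one, ← Real.exp_mul]
      _ ≤ (p / (Real.exp 1 * L)) * Real.exp (Real.exp 1) := by
          gcongr
          rw [mul_one_div, div_le_iff₀ hp0]
          nlinarith [Real.exp_pos 1]
      _ = Real.exp (Real.exp 1 - 1) * (p / L) := by
          rw [Real.exp_sub]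
          ring
end
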